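/- Let $L$ be a field in which $2 \neq 0$, let $b \in L$ satisfy $b^2 = -1$, and let $\tau$ be a ring automorphism of $L$ with $\tau(b) = -b$. Set $Q = \begin{pmatrix} -1-b & 1-b \\ -1 & 1\end{pmatrix}$, $A = \begin{pmatrix} 2 & 0 \\ 0 & 1 \end{pmatrix}$, and $\gamma_2 = Q A Q^{-1} \in GL_2(L)$. Then applying $\tau$ entrywise to $\gamma_2$ yields $2 \cdot \gamma_2^{-1}$, i.e. $\gamma_2^{\tau} = 2\,\gamma_2^{-1}$ as matrices; in particular, the entrywise $\tau$-image of $\gamma_2$ equals $\gamma_2^{-1}$ in $PGL_2(L)$. -/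

import Mathlib

/-- Let `L` be a field with `2 ≠ 0`, `b² = -1`, and `τ` a ring
automorphism with `τ b = -b`. With `γ₂ = Q A Q⁻¹`, `Q = !![-1-b, 1-b; -1, 1]`,
`A = !![2, 0; 0, 1]`, applying `τ` entrywise to `γ₂` yields `2 • γ₂⁻¹`. -/
theorem gamma_two_galois_conjugate {L : Type*} [Field L]
    (h2 : (2 : L) ≠ 0) (b : L) (hb : b ^ 2 = -1)
    (τ : L ≃+* L) (hτb : τ b = -b)
    (γ : Matrix (Fin 2) (Fin 2) L)
    (hγ : γ = !![-1 - b, 1 - b; -1, 1] * !![2, 0; 0, 1] * !![-1 - b, 1 - b; -1, 1]⁻¹) :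
    γ.map τ = (2 : L) • γ⁻¹ := by
  have hbne : b ≠ 0 := fun h => by simp [h] at hb
  have hdet : Matrix.det !![-1 - b, 1 - b; -1, (1:L)] = -2 * b := by
    simp [Matrix.det_fin_two_of]; ring
  have hQinv : (!![-1 - b, 1 - b; -1, (1:L)])⁻¹ = (-2*b)⁻¹ • !![1, -(1-b); - -1, -1-b] := by
    rw [Matrix.inv_def, hdet, Matrix.adjugate_fin_two_of, Ring.inverse_eq_inv']
  rw [hQinv] at hγ
  have hG : γ = !![(3-b)/2, b; -b/2, (3+b)/2] := by
    rw [hγ, Matrix.mul_smul]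
    ext i j
    fin_cases i <;> fin_cases j <;>
      simp [Matrix.mul_apply, Fin.sum_univ_two] <;> field_simp <;>
      first
        | linear_combination -2*hb
        | linear_combination hb
        | linear_combination 2*hb
        | linear_combination -hb
  have hGdet : γ.det = 2 := by
    rw [hG, Matrix.det_fin_two_of]
    field_simp
    linear_combination hb
  have hGinv : γ⁻¹ = (2:L)⁻¹ • !![(3+b)/2, -b; -(-b/2), (3-b)/2] := by
    rw [Matrix.inv_def, hGdet, Ring.inverse_eq_inv', hG, Matrix.adjugate_fin_two_of]
  rw [hGinv, hG, smul_smul, mul_inv_cancel₀ h2, one_smul]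
  ext i j
  fin_cases i <;> fin_cases j <;>
    simp [Matrix.map_apply, map_sub, map_add, map_div₀, map_neg, hτb, map_ofNat] <;> ring
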